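/- If X is a real random variable with |X| ≤ c almost surely and E[X] = 0, then for every t > 0, E[exp(tX)] ≤ exp((σ²/c²)·(e^{tc} − 1 − ct)), where σ² = Var(X). -/

import Mathlib

open MeasureTheory ProbabilityTheory

set_option maxHeartbeats 800000 in
lemma exp_sub_series (u : ℝ) :
    Real.exp u - 1 - u = ∑' n : ℕ, u ^ (n + 2) / (Nat.factorial (n + 2) : ℝ) := by
  have hs : Summable (fun n : ℕ => u ^ n / (n.factorial : ℝ)) := Real.summable_pow_div_factorial u
  have h1 : Summable (fun n : ℕ => u ^ (n + 1) / (Nat.factorial (n + 1) : ℝ)) :=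
    (summable_nat_add_iff 1).2 hs
  have h2 : Summable (fun n : ℕ => u ^ (n + 2) / (Nat.factorial (n + 2) : ℝ)) :=
    (summable_nat_add_iff 2).2 hs
  have hexp : Real.exp u = ∑' n : ℕ, u ^ n / (n.factorial : ℝ) := by
    rw [Real.exp_eq_exp_ℝ, NormedSpace.exp_eq_tsum_div]
  rw [hexp, hs.tsum_eq_zero_add, h1.tsum_eq_zero_add]
  norm_num [Nat.factorial]

lemma key_ineq {u v : ℝ} (huv : |u| ≤ v) :
    v ^ 2 * (Real.exp u - 1 - u) ≤ u ^ 2 * (Real.exp v - 1 - v) := by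
  have hv : 0 ≤ v := le_trans (abs_nonneg u) huv
  rw [exp_sub_series u, exp_sub_series v, ← tsum_mul_left, ← tsum_mul_left]
  have h2u : Summable (fun n : ℕ => v ^ 2 * (u ^ (n + 2) / (Nat.factorial (n + 2) : ℝ))) :=
    ((summable_nat_add_iff 2).2 (Real.summable_pow_div_factorial u)).mul_left _
  have h2v : Summable (fun n : ℕ => u ^ 2 * (v ^ (n + 2) / (Nat.factorial (n + 2) : ℝ))) :=
    ((summable_nat_add_iff 2).2 (Real.summable_pow_div_factorial v)).mul_left _
  refine Summable.tsum_le_tsum (fun n => ?_) h2u h2v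
  have hfac : (0:ℝ) < (Nat.factorial (n + 2) : ℝ) := by
    exact_mod_cast Nat.factorial_pos _
  rw [← mul_div_assoc, ← mul_div_assoc, div_le_div_iff_of_pos_right hfac]
  have habs : u ^ (n + 2) ≤ u ^ 2 * v ^ n := by
    calc u ^ (n + 2) ≤ |u ^ (n + 2)| := le_abs_self _
      _ = |u| ^ 2 * |u| ^ n := by rw [abs_pow]; ring
      _ ≤ |u| ^ 2 * v ^ n := by gcongr
      _ = u ^ 2 * v ^ n := by rw [sq_abs]
  calc v ^ 2 * u ^ (n + 2) ≤ v ^ 2 * (u ^ 2 * v ^ n) := by gcongr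
    _ = u ^ 2 * v ^ (n + 2) := by ring
  
lemma pointwise_bound {x c t : ℝ} (hc : 0 < c) (ht : 0 < t) (hx : |x| ≤ c) :
    Real.exp (t * x) ≤ 1 + t * x + x ^ 2 / c ^ 2 * (Real.exp (t * c) - 1 - c * t) := by
  have huv : |t * x| ≤ t * c := by
    rw [abs_mul, abs_of_pos ht]
    exact mul_le_mul_of_nonneg_left hx ht.le
  have hkey := key_ineq huv
  have hK : 0 ≤ Real.exp (t * c) - 1 - c * t := by
    have := Real.add_one_le_exp (t * c)
    nlinarith
  have htc : (0:ℝ) < t ^ 2 * c ^ 2 := by positivity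
  have heq : x ^ 2 / c ^ 2 * (Real.exp (t * c) - 1 - c * t)
      = (t * x) ^ 2 * (Real.exp (t * c) - 1 - t * c) / (t ^ 2 * c ^ 2) := by
    field_simp
  have hdiv : Real.exp (t * x) - 1 - t * x ≤
      (t * x) ^ 2 * (Real.exp (t * c) - 1 - t * c) / (t ^ 2 * c ^ 2) := by
    rw [le_div_iff₀ htc]
    nlinarith [hkey]
  rw [heq]
  linarith

theorem stmt1 {Ω : Type*} [MeasureSpace Ω] [IsProbabilityMeasure (ℙ : Measure Ω)]
    (X : Ω → ℝ) (hX : Measurable X) (c : ℝ) (hc : 0 < c)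
    (hbd : ∀ᵐ ω, |X ω| ≤ c)
    (hmean : ∫ ω, X ω = 0) :
    ∀ t : ℝ, 0 < t →
      ∫ ω, Real.exp (t * X ω) ≤
        Real.exp ((variance X ℙ / c ^ 2) * (Real.exp (t * c) - 1 - c * t)) := by
  intro t ht
  set K := Real.exp (t * c) - 1 - c * t with hKdef
  have hL2 : MemLp X 2 ℙ := by
    refine memLp_of_bounded (a := -c) (b := c) ?_ hX.aestronglyMeasurable 2
    filter_upwards [hbd] with ω h
    exact abs_le.1 h
  have hintX : Integrable X ℙ := hL2.integrable one_le_two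
  have hintX2 : Integrable (fun ω => X ω ^ 2) ℙ := by
    have := hL2.integrable_sq
    simpa [sq] using this
  have hint_exp : Integrable (fun ω => Real.exp (t * X ω)) ℙ := by
    refine (integrable_const (Real.exp (t * c))).mono'
      (Real.measurable_exp.comp (hX.const_mul t)).aestronglyMeasurable ?_
    filter_upwards [hbd] with ω h
    rw [Real.norm_eq_abs, abs_of_pos (Real.exp_pos _), Real.exp_le_exp]
    exact mul_le_mul_of_nonneg_left ((abs_le.1 h).2) ht.le
  have hintRHS : Integrable (fun ω => 1 + t * X ω + X ω ^ 2 / c ^ 2 * K) ℙ := by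
    refine (Integrable.add (integrable_const 1) (hintX.const_mul t)).add ?_
    have : Integrable (fun ω => X ω ^ 2 * (K / c ^ 2)) ℙ := hintX2.mul_const _
    refine this.congr (Filter.EventuallyEq.of_eq ?_)
    funext ω; ring
  have hstep : ∫ ω, Real.exp (t * X ω) ≤ ∫ ω, (1 + t * X ω + X ω ^ 2 / c ^ 2 * K) := by
    refine integral_mono_ae hint_exp hintRHS ?_
    filter_upwards [hbd] with ω h
    exact pointwise_bound hc ht h
  have hvar : variance X ℙ = ∫ ω, X ω ^ 2 := by
    rw [variance_eq_sub hL2]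
    simp only [Pi.pow_apply]
    rw [hmean]
    ring
  have hRHS : ∫ ω, (1 + t * X ω + X ω ^ 2 / c ^ 2 * K) = 1 + (variance X ℙ / c ^ 2) * K := by
    have hfun : (fun ω => 1 + t * X ω + X ω ^ 2 / c ^ 2 * K)
        = fun ω => (1 + t * X ω) + (K / c ^ 2) * X ω ^ 2 := by
      funext ω; ring
    have e1 : Integrable (fun ω => 1 + t * X ω) ℙ := (integrable_const 1).add (hintX.const_mul t)
    have e2 : Integrable (fun ω => (K / c ^ 2) * X ω ^ 2) ℙ := hintX2.const_mul _
    rw [hfun, integral_add e1 e2, integral_add (integrable_const 1) (hintX.const_mul t),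
      integral_const_mul, integral_const_mul, hmean, ← hvar]
    simp
    ring
  calc ∫ ω, Real.exp (t * X ω) ≤ 1 + (variance X ℙ / c ^ 2) * K := hstep.trans hRHS.le
    _ ≤ Real.exp ((variance X ℙ / c ^ 2) * K) := by
        have := Real.add_one_le_exp ((variance X ℙ / c ^ 2) * K)
        linarith
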